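/- Let c₁ > 0 and let m, u : ℝ → ℝ³ be continuous. If v₁, v₂ : ℝ → ℝ³ are differentiable and both satisfy (d/dt) vᵢ(t) = vᵢ(t) × m(t) − c₁ vᵢ(t) + u(t) for all t, then ‖v₁(t) − v₂(t)‖ = e^{−c₁(t−s)} ‖v₁(s) − v₂(s)‖ for all t ≥ s. In particular, any two trajectories of the vector-part error-quaternion dynamics of the geometric orientation observer converge to each other exponentially at rate c₁, i.e., these dynamics are contracting with rate c₁ in the identity metric. -/

import Mathlib

open Filter Real Topology

noncomputable section

/-- ℝ³ with the Euclidean norm. -/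
abbrev E3 := EuclideanSpace ℝ (Fin 3)

/-- Cross product on ℝ³. -/
def cross (u v : E3) : E3 :=
  WithLp.toLp 2 ![u 1 * v 2 - u 2 * v 1, u 2 * v 0 - u 0 * v 2, u 0 * v 1 - u 1 * v 0]

/-- The quaternion with real (scalar) part `a` and vector (imaginary) part `v`. -/
def quat (a : ℝ) (v : E3) : Quaternion ℝ := ⟨a, v 0, v 1, v 2⟩

/-- The vector (imaginary) part of a quaternion, as an element of ℝ³. -/
def qvec (q : Quaternion ℝ) : E3 := WithLp.toLp 2 ![q.imI, q.imJ, q.imK]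

lemma cross_sub_left (a b c : E3) : cross a c - cross b c = cross (a - b) c := by
  ext i
  fin_cases i <;>
    simp [cross, Matrix.cons_val_zero, Matrix.cons_val_one] <;> ring

lemma inner_cross_self (v w : E3) : (inner ℝ v (cross v w) : ℝ) = 0 := by
  simp only [PiLp.inner_apply, RCLike.inner_apply, starRingEnd_apply, star_trivial,
    Fin.sum_univ_three, cross, PiLp.toLp_apply]
  simp only [Matrix.cons_val_zero, Matrix.cons_val_one, Matrix.head_cons,
    Matrix.cons_val_two, Matrix.tail_cons]
  ring

theorem stmt_1 (c₁ : ℝ) (hc₁ : 0 < c₁) (m u : ℝ → E3)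
    (hm : Continuous m) (hu : Continuous u) (v₁ v₂ : ℝ → E3)
    (h₁ : ∀ t, HasDerivAt v₁ (cross (v₁ t) (m t) - c₁ • v₁ t + u t) t)
    (h₂ : ∀ t, HasDerivAt v₂ (cross (v₂ t) (m t) - c₁ • v₂ t + u t) t) :
    ∀ s t, s ≤ t → ‖v₁ t - v₂ t‖ = Real.exp (-c₁ * (t - s)) * ‖v₁ s - v₂ s‖ := by
  set w : ℝ → E3 := fun t => v₁ t - v₂ t with hwdef
  have hw : ∀ t, HasDerivAt w (cross (w t) (m t) - c₁ • w t) t := by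
    intro t
    have := (h₁ t).sub (h₂ t)
    rw [show cross (w t) (m t) - c₁ • w t = (cross (v₁ t) (m t) - c₁ • v₁ t + u t) - (cross (v₂ t) (m t) - c₁ • v₂ t + u t) by
      rw [show w t = v₁ t - v₂ t from rfl, ← cross_sub_left]
      module]
    exact this
  set g : ℝ → ℝ := fun t => (inner ℝ (w t) (w t) : ℝ) with hgdef
  have hg : ∀ t, HasDerivAt g (-(2 * c₁) * g t) t := by
    intro t
    have h := (hw t).inner ℝ (hw t)
    have e1 : (inner ℝ (w t) (cross (w t) (m t) - c₁ • w t) : ℝ) = -c₁ * g t := by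
      rw [inner_sub_right, real_inner_smul_right, inner_cross_self]
      simp [hgdef]
    have e2 : (inner ℝ (cross (w t) (m t) - c₁ • w t) (w t) : ℝ) = -c₁ * g t := by
      rw [real_inner_comm]; exact e1
    exact h.congr_deriv (by
      rw [e1, e2]
      ring)
  -- F t = exp(2 c₁ t) * g t is constant
  set F : ℝ → ℝ := fun t => Real.exp (2 * c₁ * t) * g t with hFdef
  have hF : ∀ t, HasDerivAt F 0 t := by
    intro t
    have he : HasDerivAt (fun t => Real.exp (2 * c₁ * t)) (2 * c₁ * Real.exp (2 * c₁ * t)) t := by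
      have := ((hasDerivAt_id t).const_mul (2 * c₁)).exp
      simpa [mul_comm] using this
    have := he.mul (hg t)
    exact this.congr_deriv (by
      ring)
  have hconst : ∀ a b : ℝ, F a = F b :=
    is_const_of_deriv_eq_zero (fun t => (hF t).differentiableAt)
      (fun t => (hF t).deriv)
  intro s t _
  have hFeq := hconst t s
  have hgt : g t = ‖w t‖ ^ 2 := real_inner_self_eq_norm_sq _
  have hgs : g s = ‖w s‖ ^ 2 := real_inner_self_eq_norm_sq _
  have key : ‖w t‖ ^ 2 = (Real.exp (-c₁ * (t - s)) * ‖w s‖) ^ 2 := by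
    have hexp : Real.exp (2 * c₁ * t) ≠ 0 := Real.exp_ne_zero _
    have : g t = Real.exp (2 * c₁ * s - 2 * c₁ * t) * g s := by
      simp only [hFdef] at hFeq
      rw [Real.exp_sub]
      field_simp
      linear_combination hFeq
    rw [hgt, hgs] at this
    rw [this, mul_pow, sq (Real.exp _), ← Real.exp_add]
    ring_nf
  have h1 : (0:ℝ) ≤ ‖w t‖ := norm_nonneg _
  have h2 : (0:ℝ) ≤ Real.exp (-c₁ * (t - s)) * ‖w s‖ :=
    mul_nonneg (Real.exp_pos _).le (norm_nonneg _)
  have hsq := congrArg Real.sqrt key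
  rwa [Real.sqrt_sq h1, Real.sqrt_sq h2] at hsq
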